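/- If A is a subset of the extended interval [1,+∞] containing the point 1, then b_A(Λ) = b(Λ). -/

import Mathlib

open Filter Topology

/-- The counting function of the sequence `Λ`: `F_Λ(t) = #{k : Λ k ≤ t}` for `t > 0`
and `0` otherwise. -/
noncomputable def countFn (Λ : ℕ → ℝ) (t : ℝ) : ℝ :=
  if 0 < t then (Nat.card {k : ℕ | Λ k ≤ t} : ℝ) else 0

/-- A sequence of intervals `((a n, b n])_n` with `0 < a n < b n ≤ a (n+1)` is
*substantial* if `Σ (b n / a n - 1)² = ∞`. -/
def IsSubstantial (a b : ℕ → ℝ) : Prop :=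
  (∀ n, 0 < a n ∧ a n < b n ∧ b n ≤ a (n + 1)) ∧
    ¬ Summable (fun n => (b n / a n - 1) ^ 2)

/-- `limsup_n b n / a n`, taken in the extended reals. -/
noncomputable def ratioLimsup (a b : ℕ → ℝ) : EReal :=
  Filter.limsup (fun n => ((b n / a n : ℝ) : EReal)) Filter.atTop

/-- `ℓ_I = liminf_n (F_Λ(b n) - F_Λ(a n)) / (b n - a n)`, in the extended reals. -/
noncomputable def ellOf (Λ : ℕ → ℝ) (a b : ℕ → ℝ) : EReal :=
  Filter.liminf
    (fun n => (((countFn Λ (b n) - countFn Λ (a n)) / (b n - a n) : ℝ) : EReal))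
    Filter.atTop

/-- The set `𝔯_A` of admissible rates `R ≥ 0`. -/
def RSet (Λ : ℕ → ℝ) (A : Set EReal) : Set ℝ :=
  {R | 0 ≤ R ∧ ∃ a b : ℕ → ℝ, IsSubstantial a b ∧ ratioLimsup a b ∈ A ∧
    ∀ᶠ n in Filter.atTop, R ≤ (countFn Λ (b n) - countFn Λ (a n)) / (b n - a n)}

/-- The (restricted) Beurling–Malliavin density `b_A(Λ) = sup 𝔯_A`. -/
noncomputable def bmDensity (Λ : ℕ → ℝ) (A : Set EReal) : EReal :=
  sSup ((fun r : ℝ => (r : EReal)) '' RSet Λ A)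

noncomputable def auxS (x : ℕ → ℝ) : ℕ → ℝ
  | 0 => 0
  | n+1 => auxS x n + min (x n) (1/(1 + auxS x n))

lemma auxS_nonneg (x : ℕ → ℝ) (hx : ∀ n, 0 ≤ x n) : ∀ n, 0 ≤ auxS x n := by
  intro n
  induction n with
  | zero => simp [auxS]
  | succ n ih =>
    have h : 0 ≤ min (x n) (1/(1 + auxS x n)) := le_min (hx n) (by positivity)
    show 0 ≤ auxS x n + min (x n) (1/(1 + auxS x n))
    linarith

lemma auxS_eq_sum (x : ℕ → ℝ) (n : ℕ) :
    auxS x n = ∑ i ∈ Finset.range n, min (x i) (1/(1 + auxS x i)) := by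
  induction n with
  | zero => simp [auxS]
  | succ n ih =>
    rw [Finset.sum_range_succ, ← ih]; rfl

lemma auxS_tendsto (x : ℕ → ℝ) (hx : ∀ n, 0 ≤ x n) (hs : ¬ Summable x) :
    Tendsto (auxS x) atTop atTop := by
  have hmono : Monotone (auxS x) := monotone_nat_of_le_succ (fun n => by
    have h0 := auxS_nonneg x hx n
    have h : 0 ≤ min (x n) (1/(1 + auxS x n)) :=
      le_min (hx n) (by positivity)
    show auxS x n ≤ auxS x n + min (x n) (1/(1 + auxS x n))
    linarith)
  by_contra hT
  have hbdd : BddAbove (Set.range (auxS x)) := by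
    by_contra hb; exact hT (tendsto_atTop_atTop_of_monotone' hmono hb)
  obtain ⟨M, hM⟩ := hbdd
  have hMn : ∀ n, auxS x n ≤ M := fun n => hM ⟨n, rfl⟩
  have hM0 : (0:ℝ) ≤ M := le_trans (auxS_nonneg x hx 0) (hMn 0)
  set c : ℝ := 1/(1+M) with hc
  have hc0 : 0 < c := by positivity
  have hle : ∀ n, min (x n) c ≤ min (x n) (1/(1 + auxS x n)) := fun n =>
    min_le_min le_rfl (one_div_le_one_div_of_le (by linarith [auxS_nonneg x hx n]) (by linarith [hMn n]))
  have hsum : ∀ n, ∑ i ∈ Finset.range n, min (x i) c ≤ M := fun n =>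
    le_trans (Finset.sum_le_sum (fun i _ => hle i)) (by rw [← auxS_eq_sum]; exact hMn n)
  have hsummin : Summable (fun n => min (x n) c) :=
    summable_of_sum_range_le (fun n => le_min (hx n) hc0.le) hsum
  have h0 : Tendsto (fun n => min (x n) c) atTop (𝓝 0) := hsummin.tendsto_atTop_zero
  have hev : ∀ᶠ n in atTop, min (x n) c < c := h0.eventually_lt_const hc0
  obtain ⟨N, hN⟩ := eventually_atTop.1 hev
  have heq : ∀ n ≥ N, x n = min (x n) c := by
    intro n hn
    rcases le_or_gt (x n) c with h|h
    · simp [min_eq_left h]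
    · exact absurd (hN n hn) (by rw [min_eq_right h.le]; exact lt_irrefl c)
  have : Summable (fun n => x (n + N)) :=
    ((summable_nat_add_iff N).2 hsummin).congr
      (fun n => (heq (n + N) (Nat.le_add_left N n)).symm)
  exact hs ((summable_nat_add_iff N).1 this)

lemma countFn_mono (Λ : ℕ → ℝ) (htend : Tendsto Λ atTop atTop) :
    Monotone (countFn Λ) := by
  intro s t hst
  unfold countFn
  by_cases ht : 0 < t
  · rw [if_pos ht]
    by_cases hs : 0 < s
    · rw [if_pos hs]
      obtain ⟨N, hN⟩ := eventually_atTop.1 (htend.eventually (eventually_gt_atTop t))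
      have hfin : {k : ℕ | Λ k ≤ t}.Finite := by
        apply Set.Finite.subset (Set.finite_Iio N)
        intro k hk
        simp only [Set.mem_Iio]
        by_contra h
        push_neg at h
        exact absurd hk (not_le.2 (hN k h))
      exact_mod_cast Nat.card_mono hfin (fun k hk => le_trans hk hst)
    · rw [if_neg hs]; positivity
  · rw [if_neg ht, if_neg (fun h => ht (lt_of_lt_of_le h hst))]

lemma exists_good_piece (F : ℝ → ℝ) (c : ℕ → ℝ) (m : ℕ) (hm : 0 < m) (R : ℝ)
    (h : R * (c m - c 0) ≤ F (c m) - F (c 0)) :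
    ∃ j, j < m ∧ R * (c (j+1) - c j) ≤ F (c (j+1)) - F (c j) := by
  by_contra hcon
  push_neg at hcon
  have hlt : ∑ j ∈ Finset.range m, (F (c (j+1)) - F (c j)) <
      ∑ j ∈ Finset.range m, R * (c (j+1) - c j) := by
    apply Finset.sum_lt_sum_of_nonempty (by simp [Finset.nonempty_range_iff, Nat.pos_iff_ne_zero.1 hm])
    intro j hj
    exact hcon j (Finset.mem_range.1 hj)
  rw [Finset.sum_range_sub (fun j => F (c j)), ← Finset.mul_sum,
    Finset.sum_range_sub] at hlt
  linarith

lemma key_lemma (Λ : ℕ → ℝ) (htend : Filter.Tendsto Λ Filter.atTop Filter.atTop)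
    (R : ℝ) (a b : ℕ → ℝ) (hab : IsSubstantial a b)
    (hd : ∀ᶠ n in Filter.atTop,
      R ≤ (countFn Λ (b n) - countFn Λ (a n)) / (b n - a n)) :
    ∃ a' b' : ℕ → ℝ, IsSubstantial a' b' ∧ ratioLimsup a' b' = 1 ∧
      ∀ᶠ n in Filter.atTop,
        R ≤ (countFn Λ (b' n) - countFn Λ (a' n)) / (b' n - a' n) := by
  classical
  obtain ⟨hord, hsumm⟩ := hab
  set x : ℕ → ℝ := fun n => (b n / a n - 1)^2 with hxdef
  have hx0 : ∀ n, 0 ≤ x n := fun n => sq_nonneg _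
  have hS0 : ∀ n, 0 ≤ auxS x n := auxS_nonneg x hx0
  have hS : Tendsto (auxS x) atTop atTop := auxS_tendsto x hx0 hsumm
  set d : ℕ → ℝ := fun n => Real.sqrt (1/(1 + auxS x n)) with hddef
  have hd0 : ∀ n, 0 < d n := fun n => Real.sqrt_pos.2 (by have := hS0 n; positivity)
  have hd1 : ∀ n, d n ≤ 1 := fun n => by
    show Real.sqrt (1/(1 + auxS x n)) ≤ 1
    rw [Real.sqrt_le_one, div_le_one (by have := hS0 n; positivity)]
    linarith [hS0 n]
  have hdsq : ∀ n, d n ^ 2 = 1/(1 + auxS x n) := fun n => Real.sq_sqrt (by have := hS0 n; positivity)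
  set u : ℕ → ℝ := fun n => 1 + d n with hudef
  have hu1 : ∀ n, 1 < u n := fun n => by
    show 1 < 1 + d n; linarith [hd0 n]
  have ha0 : ∀ n, 0 < a n := fun n => (hord n).1
  have hb0 : ∀ n, 0 < b n := fun n => lt_trans (ha0 n) (hord n).2.1
  have hr1 : ∀ n, 1 < b n / a n := fun n => (one_lt_div (ha0 n)).2 (hord n).2.1
  have hL0 : ∀ n, 0 < Real.log (b n / a n) := fun n => Real.log_pos (hr1 n)
  have hμ0 : ∀ n, 0 < Real.log (u n) := fun n => Real.log_pos (hu1 n)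
  have hex : ∀ n, ∃ m : ℕ, 0 < m ∧ Real.log (b n / a n) ≤ m * Real.log (u n) := by
    intro n
    obtain ⟨m, hm⟩ := exists_nat_ge (Real.log (b n / a n) / Real.log (u n))
    refine ⟨m + 1, Nat.succ_pos m, ?_⟩
    have h1 : Real.log (b n / a n) ≤ m * Real.log (u n) := by
      rw [div_le_iff₀ (hμ0 n)] at hm; linarith
    have h2 : (m:ℝ) * Real.log (u n) ≤ ((m + 1 : ℕ):ℝ) * Real.log (u n) := by
      push_cast; nlinarith [hμ0 n]
    linarith
  set m : ℕ → ℕ := fun n => Nat.find (hex n) with hmdef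
  have hmspec : ∀ n, 0 < m n ∧ Real.log (b n / a n) ≤ m n * Real.log (u n) :=
    fun n => Nat.find_spec (hex n)
  have hm0 : ∀ n, (0:ℝ) < m n := fun n => by exact_mod_cast (hmspec n).1
  set ρ : ℕ → ℝ := fun n => Real.exp (Real.log (b n / a n) / m n) with hρdef
  have hρ1 : ∀ n, 1 < ρ n := fun n =>
    Real.one_lt_exp_iff.2 (div_pos (hL0 n) (hm0 n))
  have hρu : ∀ n, ρ n ≤ u n := by
    intro n
    have h1 : Real.log (b n / a n) / m n ≤ Real.log (u n) := by
      rw [div_le_iff₀ (hm0 n)]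
      calc Real.log (b n / a n) ≤ m n * Real.log (u n) := (hmspec n).2
        _ = Real.log (u n) * m n := mul_comm _ _
    calc ρ n ≤ Real.exp (Real.log (u n)) := Real.exp_le_exp.2 h1
      _ = u n := Real.exp_log (by linarith [hu1 n])
  have hρm : ∀ n, a n * ρ n ^ (m n) = b n := by
    intro n
    have h1 : ρ n ^ (m n) = b n / a n := by
      rw [hρdef]
      show Real.exp (Real.log (b n / a n) / m n) ^ (m n) = b n / a n
      rw [← Real.exp_nat_mul, mul_div_cancel₀ _ (ne_of_gt (hm0 n))]
      exact Real.exp_log (div_pos (hb0 n) (ha0 n))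
    rw [h1, mul_div_cancel₀ _ (ne_of_gt (ha0 n))]
  set P : ℕ → Prop := fun n => ∃ j, j < m n ∧
    R * (a n * ρ n ^ (j+1) - a n * ρ n ^ j) ≤
      countFn Λ (a n * ρ n ^ (j+1)) - countFn Λ (a n * ρ n ^ j) with hPdef
  set j : ℕ → ℕ := fun n => if h : P n then h.choose else 0 with hjdef
  have hjm : ∀ n, j n < m n := by
    intro n
    rw [hjdef]
    dsimp only
    split
    · next h => exact h.choose_spec.1
    · exact (hmspec n).1
  set a' : ℕ → ℝ := fun n => a n * ρ n ^ (j n) with ha'def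
  set b' : ℕ → ℝ := fun n => a n * ρ n ^ (j n + 1) with hb'def
  have ha'0 : ∀ n, 0 < a' n := fun n => by
    have h1 := hρ1 n; have h2 := ha0 n
    show 0 < a n * ρ n ^ (j n)
    positivity
  have hb'a' : ∀ n, b' n = a' n * ρ n := fun n => by
    rw [ha'def, hb'def]; dsimp only; rw [pow_succ]; ring
  have ha'b' : ∀ n, a' n < b' n := fun n => by
    rw [hb'a' n]
    nlinarith [ha'0 n, hρ1 n]
  have hratio : ∀ n, b' n / a' n = ρ n := fun n => by
    rw [hb'a' n, mul_div_cancel_left₀ _ (ne_of_gt (ha'0 n))]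
  have hb'b : ∀ n, b' n ≤ b n := by
    intro n
    rw [hb'def, ← hρm n]
    dsimp only
    apply mul_le_mul_of_nonneg_left _ (ha0 n).le
    exact pow_le_pow_right₀ (hρ1 n).le (hjm n)
  have haa' : ∀ n, a n ≤ a' n := by
    intro n
    rw [ha'def]
    dsimp only
    nth_rewrite 1 [← mul_one (a n)]
    apply mul_le_mul_of_nonneg_left _ (ha0 n).le
    exact one_le_pow₀ (hρ1 n).le
  have hchain : ∀ n, b' n ≤ a' (n+1) :=
    fun n => le_trans (hb'b n) (le_trans (hord n).2.2 (haa' (n+1)))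
  -- the key quantitative estimate
  have hkey : ∀ n, min (x n) (1/(1 + auxS x n)) ≤ 16 * (ρ n - 1)^2 := by
    intro n
    rcases eq_or_lt_of_le (show 1 ≤ m n from (hmspec n).1) with h1 | h2
    · -- m n = 1
      have hmn1 : m n = 1 := h1.symm
      have : ρ n = b n / a n := by
        rw [hρdef]
        show Real.exp (Real.log (b n / a n) / m n) = b n / a n
        rw [hmn1]
        push_cast
        rw [div_one]
        exact Real.exp_log (div_pos (hb0 n) (ha0 n))
      rw [this]
      have := min_le_left (x n) (1/(1 + auxS x n))
      rw [hxdef] at this ⊢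
      nlinarith [sq_nonneg (b n / a n - 1)]
    · -- 2 ≤ m n
      have hm2 : 2 ≤ m n := h2
      have hpos : 0 < m n - 1 := by omega
      have hlt : m n - 1 < m n := by omega
      have hmin : ¬ (0 < m n - 1 ∧ Real.log (b n / a n) ≤ (↑(m n - 1)) * Real.log (u n)) :=
        Nat.find_min (hex n) hlt
      have hgt : (↑(m n - 1) : ℝ) * Real.log (u n) < Real.log (b n / a n) := by
        by_contra hcon
        push_neg at hcon
        exact hmin ⟨hpos, hcon⟩
      have hcast : (↑(m n - 1) : ℝ) = (m n : ℝ) - 1 := by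
        push_cast [Nat.cast_sub (by omega : 1 ≤ m n)]; ring
      rw [hcast] at hgt
      -- L/m > ((m-1)/m) μ ≥ μ/2
      have hhalf : Real.log (u n) / 2 ≤ Real.log (b n / a n) / m n := by
        rw [div_le_div_iff₀ (by norm_num) (hm0 n)]
        have hm2' : (2:ℝ) ≤ m n := by exact_mod_cast hm2
        nlinarith [hμ0 n]
      -- ρ - 1 ≥ L/m ≥ μ/2
      have hρlb : Real.log (u n) / 2 ≤ ρ n - 1 := by
        have := Real.add_one_le_exp (Real.log (b n / a n) / m n)
        rw [hρdef]
        dsimp only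
        linarith
      -- μ = log(1+d) ≥ d/(1+d) ≥ d/2
      have hlog : d n / 2 ≤ Real.log (u n) := by
        have hdn := hd0 n
        have h3 : Real.log (1/(1 + d n)) ≤ 1/(1 + d n) - 1 :=
          Real.log_le_sub_one_of_pos (by positivity)
        rw [one_div, Real.log_inv] at h3
        show d n / 2 ≤ Real.log (1 + d n)
        have h4 : d n / (1 + d n) ≤ Real.log (1 + d n) := by
          have h5 : (1 + d n)⁻¹ - 1 = -(d n / (1 + d n)) := by
            field_simp
            ring
          rw [h5] at h3
          linarith
        have h6 : d n / 2 ≤ d n / (1 + d n) := by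
          apply div_le_div_of_nonneg_left (hd0 n).le (by linarith [hd0 n])
          linarith [hd1 n]
        linarith
      have hρd : d n / 4 ≤ ρ n - 1 := by linarith
      have : d n ^ 2 ≤ 16 * (ρ n - 1)^2 := by nlinarith [hd0 n]
      calc min (x n) (1/(1 + auxS x n)) ≤ 1/(1 + auxS x n) := min_le_right _ _
        _ = d n ^ 2 := (hdsq n).symm
        _ ≤ 16 * (ρ n - 1)^2 := this
  -- substantiality of the new sequence
  have hsumm' : ¬ Summable (fun n => (b' n / a' n - 1) ^ 2) := by
    intro hcon
    have hcon2 : Summable (fun n => 16 * (ρ n - 1)^2) := by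
      apply Summable.mul_left
      exact hcon.congr (fun n => by rw [hratio n])
    have hminsum : Summable (fun n => min (x n) (1/(1 + auxS x n))) := by
      apply Summable.of_nonneg_of_le _ hkey hcon2
      intro n
      exact le_min (hx0 n) (by have := hS0 n; positivity)
    have hbdd : ∀ n, auxS x n ≤ ∑' i, min (x i) (1/(1 + auxS x i)) := by
      intro n
      rw [auxS_eq_sum]
      exact Summable.sum_le_tsum (Finset.range n)
        (fun i _ => le_min (hx0 i) (by have := hS0 i; positivity)) hminsum
    obtain ⟨n, hn⟩ :=
      (hS.eventually (eventually_gt_atTop (∑' i, min (x i) (1/(1 + auxS x i))))).exists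
    exact absurd (hbdd n) (not_le.2 hn)
  -- ratio limsup = 1
  have hρt : Tendsto ρ atTop (𝓝 1) := by
    have h1S : Tendsto (fun n => 1/(1 + auxS x n)) atTop (𝓝 0) :=
      Tendsto.div_atTop tendsto_const_nhds (tendsto_atTop_add_const_left _ 1 hS)
    have hdt : Tendsto d atTop (𝓝 0) := by
      have := (Real.continuous_sqrt.tendsto 0).comp h1S
      rwa [Real.sqrt_zero] at this
    have hut : Tendsto u atTop (𝓝 1) := by
      have := tendsto_const_nhds.add hdt (α := ℕ) (f := fun _ => (1:ℝ))
      rwa [add_zero] at this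
    exact tendsto_of_tendsto_of_tendsto_of_le_of_le tendsto_const_nhds hut
      (fun n => (hρ1 n).le) hρu
  have hlim : ratioLimsup a' b' = 1 := by
    have ht : Tendsto (fun n => ((b' n / a' n : ℝ) : EReal)) atTop (𝓝 (1 : EReal)) := by
      have : Tendsto (fun n => ((ρ n : ℝ) : EReal)) atTop (𝓝 ((1:ℝ) : EReal)) :=
        (continuous_coe_real_ereal.tendsto 1).comp hρt
      rw [show ((1:ℝ) : EReal) = (1 : EReal) from rfl] at this
      exact this.congr (fun n => by rw [hratio n])
    exact ht.limsup_eq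
  -- eventual density bound
  have hev : ∀ᶠ n in Filter.atTop,
      R ≤ (countFn Λ (b' n) - countFn Λ (a' n)) / (b' n - a' n) := by
    filter_upwards [hd] with n hn
    have hba : 0 < b n - a n := sub_pos.2 (hord n).2.1
    have h1 : R * (b n - a n) ≤ countFn Λ (b n) - countFn Λ (a n) :=
      (le_div_iff₀ hba).1 hn
    have hPn : P n := by
      rw [hPdef]
      have hc0 : a n * ρ n ^ (0:ℕ) = a n := by rw [pow_zero, mul_one]
      have hcm : a n * ρ n ^ (m n) = b n := hρm n
      obtain ⟨jj, hjj, hgood⟩ := exists_good_piece (countFn Λ)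
        (fun k => a n * ρ n ^ k) (m n) (hmspec n).1 R
        (by show R * (a n * ρ n ^ (m n) - a n * ρ n ^ (0:ℕ)) ≤
              countFn Λ (a n * ρ n ^ (m n)) - countFn Λ (a n * ρ n ^ (0:ℕ))
            rw [hc0, hcm]; exact h1)
      exact ⟨jj, hjj, hgood⟩
    have hjn : j n = hPn.choose := by
      rw [hjdef]; dsimp only; rw [dif_pos hPn]
    have hspec := hPn.choose_spec.2
    rw [← hjn] at hspec
    have hlen : 0 < b' n - a' n := sub_pos.2 (ha'b' n)
    rw [le_div_iff₀ hlen]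
    exact hspec
  exact ⟨a', b', ⟨fun n => ⟨ha'0 n, ha'b' n, hchain n⟩, hsumm'⟩, hlim, hev⟩

theorem stmt_5 (Λ : ℕ → ℝ) (hmono : StrictMono Λ) (h0 : 0 ≤ Λ 0)
    (htend : Filter.Tendsto Λ Filter.atTop Filter.atTop) (A : Set EReal) (hA : A ⊆ Set.Ici (1 : EReal))
    (h1 : (1 : EReal) ∈ A) :
    bmDensity Λ A = bmDensity Λ (Set.Ici (1 : EReal)) := by
  have hset : RSet Λ A = RSet Λ (Set.Ici (1 : EReal)) := by
    apply Set.Subset.antisymm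
    · rintro R ⟨hR0, a, b, hsub, hmem, hev⟩
      exact ⟨hR0, a, b, hsub, hA hmem, hev⟩
    · rintro R ⟨hR0, a, b, hsub, _, hev⟩
      obtain ⟨a', b', hsub', hlim', hev'⟩ := key_lemma Λ htend R a b hsub hev
      exact ⟨hR0, a', b', hsub', by rw [hlim']; exact h1, hev'⟩
  unfold bmDensity
  rw [hset]
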